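/- arXiv:1903.05818 — 4 statements merged into one kernel-verified Lean document; each statement's English description precedes it below -/
import Mathlib

section
/- For the Jensen-Shannon generator f, for every integer i ≥ 2 one has f^{(i)}(1)/i! = (-1)^{i-2} (1 - 1/2^{i-1}) / (i(i-1)). -/
open Real

/-- Derivative of the JS generator on `(0, ∞)`. -/
lemma js_deriv1 {u : ℝ} (hu : 0 < u) :
    deriv (fun u : ℝ => -(u + 1) * Real.log ((1 + u) / 2) + u * Real.log u) u
      = Real.log u - Real.log ((1 + u) / 2) := by
  have h1u : (0:ℝ) < 1 + u := by linarith
  have h1 : HasDerivAt (fun u : ℝ => (1 + u) / 2) (1 / 2) u := by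
    simpa using ((hasDerivAt_id u).const_add 1).div_const 2
  have h2 : HasDerivAt (fun u : ℝ => Real.log ((1 + u) / 2)) (1 / (1 + u)) u := by
    have := (Real.hasDerivAt_log (by positivity : (1 + u) / 2 ≠ 0)).comp u h1
    refine this.congr_deriv ?_
    field_simp
  have h3 : HasDerivAt (fun u : ℝ => -(u + 1)) (-1) u := by
    exact ((hasDerivAt_id u).add_const 1).neg
  have h4 : HasDerivAt (fun u : ℝ => -(u + 1) * Real.log ((1 + u) / 2))
      (-1 * Real.log ((1 + u) / 2) + -(u + 1) * (1 / (1 + u))) u := h3.mul h2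
  have h5 : HasDerivAt (fun u : ℝ => u * Real.log u)
      (1 * Real.log u + u * u⁻¹) u :=
    (hasDerivAt_id u).mul (Real.hasDerivAt_log hu.ne')
  have h6 := h4.add h5
  rw [(show HasDerivAt (fun u : ℝ => -(u + 1) * Real.log ((1 + u) / 2) + u * Real.log u) _ u from h6).deriv]
  have : -(u + 1) * (1 / (1 + u)) = -1 := by field_simp; ring
  rw [this]
  rw [mul_inv_cancel₀ hu.ne']
  ring

/-- Second derivative layer. -/
lemma js_deriv2 {u : ℝ} (hu : 0 < u) :
    deriv (fun u : ℝ => Real.log u - Real.log ((1 + u) / 2)) u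
      = u⁻¹ - (1 + u)⁻¹ := by
  have h1u : (0:ℝ) < 1 + u := by linarith
  have h1 : HasDerivAt (fun u : ℝ => (1 + u) / 2) (1 / 2) u := by
    simpa using ((hasDerivAt_id u).const_add 1).div_const 2
  have h2 : HasDerivAt (fun u : ℝ => Real.log ((1 + u) / 2)) ((1 + u)⁻¹) u := by
    have := (Real.hasDerivAt_log (by positivity : (1 + u) / 2 ≠ 0)).comp u h1
    refine this.congr_deriv ?_
    field_simp
  have h5 : HasDerivAt (fun u : ℝ => Real.log u) (u⁻¹) u := Real.hasDerivAt_log hu.ne'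
  exact (h5.sub h2).deriv

/-- Iterated derivatives of `u ↦ u⁻¹ - (1+u)⁻¹` on `(0,∞)`. -/
lemma js_iter (n : ℕ) :
    ∀ u ∈ Set.Ioi (0:ℝ), iteratedDeriv n (fun u : ℝ => u⁻¹ - (1 + u)⁻¹) u
      = (-1) ^ n * (Nat.factorial n) * ((u ^ (n + 1))⁻¹ - ((1 + u) ^ (n + 1))⁻¹) := by
  induction n with
  | zero => intro u hu; simp
  | succ n ih =>
    intro u hu
    have hu' : (0:ℝ) < u := hu
    have h1u : (0:ℝ) < 1 + u := by linarith
    rw [iteratedDeriv_succ]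
    have hev : iteratedDeriv n (fun u : ℝ => u⁻¹ - (1 + u)⁻¹) =ᶠ[nhds u]
        fun u : ℝ => (-1) ^ n * (Nat.factorial n) * ((u ^ (n + 1))⁻¹ - ((1 + u) ^ (n + 1))⁻¹) := by
      filter_upwards [isOpen_Ioi.mem_nhds hu] with v hv using ih v hv
    rw [hev.deriv_eq]
    have hA : HasDerivAt (fun u : ℝ => (u ^ (n + 1))⁻¹)
        (-(((n:ℝ) + 1) * u ^ n) / (u ^ (n + 1)) ^ 2) u := by
      have := (hasDerivAt_pow (n + 1) u).inv (pow_ne_zero _ hu'.ne')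
      refine this.congr_deriv ?_; simp
    have hB : HasDerivAt (fun u : ℝ => ((1 + u) ^ (n + 1))⁻¹)
        (-(((n:ℝ) + 1) * (1 + u) ^ n) / ((1 + u) ^ (n + 1)) ^ 2) u := by
      have hin : HasDerivAt (fun u : ℝ => (1 + u) ^ (n + 1)) (((n:ℝ) + 1) * (1 + u) ^ n) u := by
        have := (hasDerivAt_pow (n + 1) (1 + u)).comp u ((hasDerivAt_id u).const_add 1)
        refine this.congr_deriv ?_; simp
      have := hin.inv (pow_ne_zero _ h1u.ne')
      exact this
    have h := ((hA.sub hB).const_mul ((-1:ℝ) ^ n * (Nat.factorial n))).deriv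
    rw [show deriv (fun u : ℝ => (-1) ^ n * (Nat.factorial n) * ((u ^ (n + 1))⁻¹ - ((1 + u) ^ (n + 1))⁻¹)) u = _ from h]
    rw [Nat.factorial_succ]
    push_cast
    field_simp
    ring
  
/-- For the Jensen-Shannon generator `f`, for every integer `i ≥ 2` one has
`f^(i)(1)/i! = (-1)^(i-2) (1 - 1/2^(i-1)) / (i(i-1))`. -/
theorem js_generator_taylor_coeff (i : ℕ) (hi : 2 ≤ i) :
    iteratedDeriv i (fun u : ℝ => -(u + 1) * Real.log ((1 + u) / 2) + u * Real.log u) 1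
      / (Nat.factorial i)
      = (-1 : ℝ) ^ (i - 2) * (1 - 1 / 2 ^ (i - 1)) / ((i : ℝ) * ((i : ℝ) - 1)) := by
  obtain ⟨n, rfl⟩ := Nat.exists_eq_add_of_le hi
  have h2n : 2 + n = n + 1 + 1 := by ring
  rw [h2n, iteratedDeriv_succ', iteratedDeriv_succ']
  have hev1 : deriv (fun u : ℝ => -(u + 1) * Real.log ((1 + u) / 2) + u * Real.log u)
      =ᶠ[nhds (1:ℝ)] fun u : ℝ => Real.log u - Real.log ((1 + u) / 2) := by
    filter_upwards [isOpen_Ioi.mem_nhds (by norm_num : (1:ℝ) ∈ Set.Ioi 0)] with v hv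
    exact js_deriv1 hv
  have hev2 : deriv (deriv (fun u : ℝ => -(u + 1) * Real.log ((1 + u) / 2) + u * Real.log u))
      =ᶠ[nhds (1:ℝ)] fun u : ℝ => u⁻¹ - (1 + u)⁻¹ := by
    have := hev1.deriv
    refine this.trans ?_
    filter_upwards [isOpen_Ioi.mem_nhds (by norm_num : (1:ℝ) ∈ Set.Ioi 0)] with v hv
    exact js_deriv2 hv
  rw [hev2.iteratedDeriv_eq n]
  rw [js_iter n 1 (by norm_num)]
  have h12 : (1:ℝ) + 1 = 2 := by norm_num
  rw [h12, one_pow]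
  have hfact : (Nat.factorial (n + 1 + 1) : ℝ)
      = ((n:ℝ) + 2) * ((n:ℝ) + 1) * (Nat.factorial n) := by
    rw [Nat.factorial_succ, Nat.factorial_succ]
    push_cast; ring
  rw [hfact, show n + 1 + 1 - 2 = n from by omega, show n + 1 + 1 - 1 = n + 1 from by omega]
  push_cast
  have hfn : (Nat.factorial n : ℝ) ≠ 0 := by positivity
  have h2 : (2:ℝ) ^ (n + 1) ≠ 0 := by positivity
  field_simp
  ring
end

section
/- Let p, q be probability density functions on a measure space with m ≤ q(x)/p(x) ≤ M almost everywhere, where 0 < m ≤ 1 ≤ M. Then for every integer s ≥ 2, χ_s(p:q) := ∫ |q(x) - p(x)|^s / p(x)^{s-1} dμ(x) ≤ (M - m)^s. -/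
open MeasureTheory

/-- For probability densities `p, q` with `m ≤ q/p ≤ M` a.e., `0 < m ≤ 1 ≤ M`, we have
`χ_s(p:q) = ∫ |q - p|^s / p^(s-1) dμ ≤ (M - m)^s` for every integer `s ≥ 2`. -/
theorem abs_chi_bounded_ratio {X : Type*} [MeasurableSpace X] (μ : Measure X)
    (p q : X → ℝ) (hpm : Measurable p) (hqm : Measurable q)
    (hp0 : ∀ x, 0 ≤ p x) (hq0 : ∀ x, 0 ≤ q x)
    (hp1 : ∫ x, p x ∂μ = 1) (hq1 : ∫ x, q x ∂μ = 1)
    (m M : ℝ) (hm : 0 < m) (hm1 : m ≤ 1) (hM1 : 1 ≤ M)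
    (hratio : ∀ᵐ x ∂μ, m ≤ q x / p x ∧ q x / p x ≤ M) :
    ∀ s : ℕ, 2 ≤ s →
      ∫ x, |q x - p x| ^ s / p x ^ (s - 1) ∂μ ≤ (M - m) ^ s := by
  intro s hs
  obtain ⟨t, rfl⟩ : ∃ t, s = t + 2 := ⟨s - 2, by omega⟩
  have hpInt : Integrable p μ := by
    by_contra h
    rw [integral_undef h] at hp1; norm_num at hp1
  have hkey : ∀ᵐ x ∂μ, |q x - p x| ^ (t + 2) / p x ^ (t + 2 - 1)
      ≤ (M - m) ^ (t + 2) * p x := by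
    filter_upwards [hratio] with x hx
    obtain ⟨h1, h2⟩ := hx
    have hpx : 0 < p x := by
      rcases (hp0 x).lt_or_eq with h | h
      · exact h
      · exfalso; rw [← h, div_zero] at h1; linarith
    have hr : |q x / p x - 1| ≤ M - m := by
      rw [abs_le]; constructor <;> linarith
    have heq : |q x - p x| ^ (t + 2) / p x ^ (t + 2 - 1)
        = |q x / p x - 1| ^ (t + 2) * p x := by
      have h3 : q x - p x = (q x / p x - 1) * p x := by field_simp
      rw [h3, abs_mul, abs_of_pos hpx, mul_pow]
      have : (t + 2) - 1 = t + 1 := rfl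
      rw [this, pow_succ (p x) (t + 1)]
      field_simp
    rw [heq]
    exact mul_le_mul_of_nonneg_right
      (pow_le_pow_left₀ (abs_nonneg _) hr _) hpx.le
  have hmeas : AEStronglyMeasurable
      (fun x => |q x - p x| ^ (t + 2) / p x ^ (t + 2 - 1)) μ :=
    (((hqm.sub hpm).abs.pow_const _).div (hpm.pow_const _)).aestronglyMeasurable
  have hInt : Integrable (fun x => |q x - p x| ^ (t + 2) / p x ^ (t + 2 - 1)) μ := by
    apply Integrable.mono' (hpInt.const_mul ((M - m) ^ (t + 2))) hmeas
    filter_upwards [hkey] with x hx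
    rw [Real.norm_eq_abs, abs_of_nonneg
      (div_nonneg (by positivity) (pow_nonneg (hp0 x) _))]
    exact hx
  calc ∫ x, |q x - p x| ^ (t + 2) / p x ^ (t + 2 - 1) ∂μ
      ≤ ∫ x, (M - m) ^ (t + 2) * p x ∂μ :=
        integral_mono_ae hInt (hpInt.const_mul _) hkey
    _ = (M - m) ^ (t + 2) := by rw [integral_const_mul, hp1, mul_one]
end

section
/- Let f : (0,∞) → ℝ be (k+1)-times continuously differentiable with f(1) = f'(1) = 0 and |f^{(k+1)}(u)| ≤ L on [m, M], where 0 < m ≤ 1 ≤ M. Let p, q be probability densities with m ≤ q(x)/p(x) ≤ M a.e. Then |I_f(p:q) - Σ_{i=2}^{k} f^{(i)}(1)/i! · χ_i^±(p:q)| ≤ L/(k+1)! · (M - m)^{k+1}, where I_f(p:q) = ∫ p f(q/p) dμ and χ_i^±(p:q) = ∫ (q-p)^i/p^{i-1} dμ. -/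
open MeasureTheory Set

private lemma iterDW_eq {t s : Set ℝ} (ht : IsOpen t) (hst : s ⊆ t) (hs : UniqueDiffOn ℝ s)
    {f : ℝ → ℝ} {n m : ℕ} (hf : ContDiffOn ℝ n f t) (hm : m ≤ n) {x : ℝ} (hx : x ∈ s) :
    iteratedDerivWithin m f s x = iteratedDeriv m f x := by
  have hf' : ContDiffOn ℝ m f t := hf.of_le (by exact_mod_cast hm)
  have H := (hf'.ftaylorSeriesWithin ht.uniqueDiffOn).mono hst
  have h2 := H.eq_iteratedFDerivWithin_of_uniqueDiffOn le_rfl hs hx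
  have h3 : iteratedFDerivWithin ℝ m f s x = iteratedFDeriv ℝ m f x := by
    rw [← h2]
    exact iteratedFDerivWithin_of_isOpen m ht (hst hx)
  rw [iteratedDerivWithin_eq_iteratedFDerivWithin, h3, iteratedDeriv_eq_iteratedFDeriv]

private lemma taylor_right (f : ℝ → ℝ) (k : ℕ) {t : Set ℝ} (ht : IsOpen t)
    {b : ℝ} (hb : 1 < b) (hsub : Set.Icc 1 b ⊆ t) (hf : ContDiffOn ℝ (k + 1) f t) :
    ∃ x' ∈ Set.Ioo 1 b, f b - ∑ i ∈ Finset.range (k + 1),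
        iteratedDeriv i f 1 / (Nat.factorial i) * (b - 1) ^ i
      = iteratedDeriv (k + 1) f x' * (b - 1) ^ (k + 1) / (Nat.factorial (k + 1)) := by
  have hfk : ContDiffOn ℝ k f (Set.Icc 1 b) :=
    (hf.of_le (by exact_mod_cast Nat.le_succ k)).mono hsub
  have hfN : ContDiffOn ℝ (k + 1 : ℕ) f t := by exact_mod_cast hf
  have hD : DifferentiableOn ℝ (iteratedDeriv k f) t := by
    have h := hfN.differentiableOn_iteratedDerivWithin (m := k)
      (by exact_mod_cast Nat.lt_succ_self k) ht.uniqueDiffOn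
    exact h.congr fun y hy =>
      (iterDW_eq ht (subset_refl t) ht.uniqueDiffOn hfN (Nat.le_succ k) hy).symm
  have hdiff : DifferentiableOn ℝ (iteratedDerivWithin k f (Set.Icc 1 b)) (Set.Ioo 1 b) := by
    intro y hy
    have hyT : y ∈ t := hsub (Ioo_subset_Icc_self hy)
    refine ((hD y hyT).differentiableAt (ht.mem_nhds hyT)).differentiableWithinAt.congr ?_ ?_
    · intro z hz
      exact iterDW_eq ht hsub (uniqueDiffOn_Icc hb) hfN (Nat.le_succ k) (Ioo_subset_Icc_self hz)
    · exact iterDW_eq ht hsub (uniqueDiffOn_Icc hb) hfN (Nat.le_succ k) (Ioo_subset_Icc_self hy)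
  obtain ⟨x', hx', hEq⟩ := taylor_mean_remainder_lagrange (x₀ := 1) (x := b) hb.ne
    (by rw [uIcc_of_le hb.le]; exact hfk) (by rw [uIcc_of_le hb.le, uIoo_of_lt hb]; exact hdiff)
  rw [uIoo_of_lt hb] at hx'
  rw [uIcc_of_le hb.le] at hEq
  refine ⟨x', hx', ?_⟩
  have hT : taylorWithinEval f k (Set.Icc 1 b) 1 b
      = ∑ i ∈ Finset.range (k + 1), iteratedDeriv i f 1 / (Nat.factorial i) * (b - 1) ^ i := by
    rw [taylor_within_apply]
    refine Finset.sum_congr rfl fun i hi => ?_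
    rw [iterDW_eq ht hsub (uniqueDiffOn_Icc hb) hfN
      (by have := Finset.mem_range.mp hi; omega) (Set.left_mem_Icc.mpr hb.le)]
    rw [smul_eq_mul]; ring
  have hR : iteratedDerivWithin (k+1) f (Set.Icc 1 b) x' = iteratedDeriv (k+1) f x' :=
    iterDW_eq ht hsub (uniqueDiffOn_Icc hb) hfN le_rfl (Ioo_subset_Icc_self hx')
  rw [← hT, hEq, hR]

private lemma taylor_pointwise (f : ℝ → ℝ) (k : ℕ) (L m M : ℝ)
    (hm : 0 < m) (hm1 : m ≤ 1) (hM1 : 1 ≤ M)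
    (hf : ContDiffOn ℝ (k + 1) f (Set.Ioi 0))
    (hL : ∀ u ∈ Set.Icc m M, |iteratedDeriv (k + 1) f u| ≤ L)
    {u : ℝ} (hu : u ∈ Set.Icc m M) :
    |f u - ∑ i ∈ Finset.range (k + 1), iteratedDeriv i f 1 / (Nat.factorial i) * (u - 1) ^ i|
      ≤ L / (Nat.factorial (k + 1)) * (M - m) ^ (k + 1) := by
  have hL0 : 0 ≤ L := le_trans (abs_nonneg _) (hL 1 ⟨hm1, hM1⟩)
  have habs : |u - 1| ≤ M - m := abs_le.mpr ⟨by linarith [hu.1], by linarith [hu.2]⟩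
  have key : |f u - ∑ i ∈ Finset.range (k+1),
        iteratedDeriv i f 1 / (Nat.factorial i) * (u-1)^i|
      ≤ L / (Nat.factorial (k + 1)) * |u - 1| ^ (k + 1) := by
    rcases lt_trichotomy u 1 with hlt | heq | hgt
    · -- reflection case u < 1
      set F : ℝ → ℝ := fun x => f (2 - x) with hF
      have hFc : ContDiffOn ℝ (k+1) F (Set.Iio 2) := by
        refine hf.comp ((contDiff_const.sub contDiff_id).contDiffOn) ?_
        intro x hx
        simp only [Set.mem_Iio] at hx
        simpa using sub_pos.mpr hx
      have hFd : ∀ (i : ℕ) (a : ℝ),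
          iteratedDeriv i F a = (-1)^i * iteratedDeriv i f (2 - a) := by
        intro i a
        have h1 : F = fun x => (fun y => f (y + 2)) (-x) := by
          funext x; simp [hF, sub_eq_neg_add]
        have h2 : iteratedDeriv i F a
            = (-1:ℝ)^i • iteratedDeriv i (fun y => f (y + 2)) (-a) := by
          rw [h1]; exact iteratedDeriv_comp_neg i (fun y => f (y + 2)) a
        rw [h2, iteratedDeriv_comp_add_const, smul_eq_mul]
        show (-1:ℝ)^i * iteratedDeriv i f (-a + 2) = _
        rw [show -a + 2 = 2 - a from by ring]
      set v := 2 - u with hv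
      have hbv : 1 < v := by rw [hv]; linarith
      have hsub : Set.Icc (1:ℝ) v ⊆ Set.Iio 2 := by
        intro x hx
        have : v < 2 := by rw [hv]; linarith [hm.trans_le hu.1]
        exact lt_of_le_of_lt hx.2 this
      obtain ⟨x', hx', hEq⟩ := taylor_right F k isOpen_Iio hbv hsub hFc
      have hFv : F v = f u := by simp [hF, hv]
      have hsum : ∑ i ∈ Finset.range (k+1),
            iteratedDeriv i F 1 / (Nat.factorial i) * (v-1)^i
          = ∑ i ∈ Finset.range (k+1),
            iteratedDeriv i f 1 / (Nat.factorial i) * (u-1)^i := by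
        refine Finset.sum_congr rfl fun i _ => ?_
        rw [hFd i 1, show (2:ℝ) - 1 = 1 by norm_num,
          show (v - 1 : ℝ) = 1 - u by rw [hv]; ring]
        have h4 : ((-1:ℝ))^i * (1 - u)^i = (u - 1)^i := by
          rw [← mul_pow]; congr 1; ring
        calc (-1:ℝ)^i * iteratedDeriv i f 1 / (Nat.factorial i) * (1-u)^i
            = iteratedDeriv i f 1 / (Nat.factorial i) * ((-1)^i * (1-u)^i) := by ring
          _ = iteratedDeriv i f 1 / (Nat.factorial i) * (u-1)^i := by rw [h4]
      have hx'mem : 2 - x' ∈ Set.Icc m M := by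
        constructor
        · have h5 : x' < v := hx'.2
          rw [hv] at h5
          have : u < 2 - x' := by linarith
          linarith [hu.1]
        · linarith [hx'.1]
      have hrem : |iteratedDeriv (k+1) F x'| ≤ L := by
        rw [hFd, abs_mul, abs_pow, abs_neg, abs_one, one_pow, one_mul]
        exact hL _ hx'mem
      have habs2 : |v - 1| = |u - 1| := by
        rw [show (v - 1 : ℝ) = 1 - u by rw [hv]; ring, abs_sub_comm]
      rw [← hFv, ← hsum, hEq, abs_div, abs_mul, abs_pow, Nat.abs_cast, habs2,
        show L / (Nat.factorial (k+1)) * |u-1|^(k+1)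
          = L * |u-1|^(k+1) / (Nat.factorial (k+1)) by ring]
      gcongr
    · subst heq
      have hs0 : ∑ i ∈ Finset.range (k+1),
          iteratedDeriv i f 1 / (Nat.factorial i) * ((1:ℝ)-1)^i = f 1 := by
        rw [Finset.sum_eq_single 0 (fun i _ hi => by simp [zero_pow hi])
          (fun h => absurd (Finset.mem_range.mpr (Nat.succ_pos k)) h)]
        simp
      rw [hs0, sub_self, abs_zero]
      positivity
    · obtain ⟨x', hx', hEq⟩ := taylor_right f k isOpen_Ioi hgt
        (fun x hx => lt_of_lt_of_le one_pos hx.1) hf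
      have hx'mem : x' ∈ Set.Icc m M := ⟨by linarith [hx'.1], by linarith [hx'.2, hu.2]⟩
      rw [hEq, abs_div, abs_mul, abs_pow, Nat.abs_cast,
        show L / (Nat.factorial (k+1)) * |u-1|^(k+1)
          = L * |u-1|^(k+1) / (Nat.factorial (k+1)) by ring]
      gcongr
      exact hL _ hx'mem
  calc |f u - ∑ i ∈ Finset.range (k+1),
        iteratedDeriv i f 1 / (Nat.factorial i) * (u-1)^i|
      ≤ L / (Nat.factorial (k + 1)) * |u - 1| ^ (k + 1) := key
    _ ≤ L / (Nat.factorial (k + 1)) * (M - m) ^ (k + 1) := by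
        gcongr



/-- Power chi expansion bound for `f`-divergences: if `f` is `(k+1)`-times continuously
differentiable on `(0,∞)` with `f(1) = f'(1) = 0` and `|f^(k+1)| ≤ L` on `[m, M]`, and
`p, q` are probability densities with `m ≤ q/p ≤ M` a.e. (`0 < m ≤ 1 ≤ M`), then
`|I_f(p:q) - Σ_{i=2}^k f^(i)(1)/i! χ_i^±(p:q)| ≤ L/(k+1)! (M-m)^(k+1)`. -/
theorem f_divergence_chi_expansion_bound {X : Type*} [MeasurableSpace X] (μ : Measure X)
    (p q : X → ℝ) (hpm : Measurable p) (hqm : Measurable q)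
    (hp0 : ∀ x, 0 ≤ p x) (hq0 : ∀ x, 0 ≤ q x)
    (hp1 : ∫ x, p x ∂μ = 1) (hq1 : ∫ x, q x ∂μ = 1)
    (f : ℝ → ℝ) (k : ℕ) (L m M : ℝ) (hm : 0 < m) (hm1 : m ≤ 1) (hM1 : 1 ≤ M)
    (hf : ContDiffOn ℝ (k + 1) f (Set.Ioi 0))
    (hf1 : f 1 = 0) (hf'1 : deriv f 1 = 0)
    (hL : ∀ u ∈ Set.Icc m M, |iteratedDeriv (k + 1) f u| ≤ L)
    (hratio : ∀ᵐ x ∂μ, m ≤ q x / p x ∧ q x / p x ≤ M)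
    (hIf : Integrable (fun x => p x * f (q x / p x)) μ)
    (hchi : ∀ i : ℕ, 2 ≤ i → i ≤ k →
      Integrable (fun x => (q x - p x) ^ i / p x ^ (i - 1)) μ) :
    |∫ x, p x * f (q x / p x) ∂μ
        - ∑ i ∈ Finset.Icc 2 k,
            iteratedDeriv i f 1 / (Nat.factorial i)
              * ∫ x, (q x - p x) ^ i / p x ^ (i - 1) ∂μ|
      ≤ L / (Nat.factorial (k + 1)) * (M - m) ^ (k + 1) := by
  classical
  set C := L / (Nat.factorial (k + 1)) * (M - m) ^ (k + 1) with hC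
  have hppos : ∀ᵐ x ∂μ, 0 < p x := by
    filter_upwards [hratio] with x hx
    rcases (hp0 x).lt_or_eq with h | h
    · exact h
    · exfalso
      have h1 := hx.1
      rw [← h, div_zero] at h1
      linarith
  have hPint : Integrable p μ := by
    by_contra h
    rw [integral_undef h] at hp1
    exact zero_ne_one hp1
  have hSint : Integrable (fun x => ∑ i ∈ Finset.Icc 2 k,
      iteratedDeriv i f 1 / (Nat.factorial i) * ((q x - p x) ^ i / p x ^ (i - 1))) μ := by
    apply integrable_finset_sum
    intro i hi
    obtain ⟨h2, hk'⟩ := Finset.mem_Icc.mp hi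
    exact (hchi i h2 hk').const_mul _
  have hsum_int : ∑ i ∈ Finset.Icc 2 k, iteratedDeriv i f 1 / (Nat.factorial i)
        * ∫ x, (q x - p x) ^ i / p x ^ (i - 1) ∂μ
      = ∫ x, ∑ i ∈ Finset.Icc 2 k, iteratedDeriv i f 1 / (Nat.factorial i)
        * ((q x - p x) ^ i / p x ^ (i - 1)) ∂μ := by
    rw [integral_finset_sum]
    · exact Finset.sum_congr rfl fun i hi => (integral_const_mul _ _).symm
    · intro i hi
      obtain ⟨h2, hk'⟩ := Finset.mem_Icc.mp hi
      exact (hchi i h2 hk').const_mul _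
  rw [hsum_int, ← integral_sub hIf hSint]
  have hbound : ∀ᵐ x ∂μ, ‖p x * f (q x / p x) - ∑ i ∈ Finset.Icc 2 k,
      iteratedDeriv i f 1 / (Nat.factorial i) * ((q x - p x) ^ i / p x ^ (i - 1))‖
      ≤ C * p x := by
    filter_upwards [hratio, hppos] with x hx hp
    set u := q x / p x with hu
    have hup : q x - p x = p x * (u - 1) := by
      rw [hu]; field_simp
    have hterm : ∀ i : ℕ, 2 ≤ i →
        (q x - p x) ^ i / p x ^ (i - 1) = p x * (u - 1) ^ i := by
      intro i h2
      have hip : p x ^ i = p x ^ (i - 1) * p x := by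
        rw [← pow_succ]; congr 1; omega
      have hpow : p x ^ (i - 1) ≠ 0 := pow_ne_zero _ hp.ne'
      rw [hup, mul_pow, hip]
      field_simp
    have hsum2 : ∑ i ∈ Finset.Icc 2 k,
          iteratedDeriv i f 1 / (Nat.factorial i) * ((q x - p x) ^ i / p x ^ (i - 1))
        = p x * ∑ i ∈ Finset.range (k + 1),
          iteratedDeriv i f 1 / (Nat.factorial i) * (u - 1) ^ i := by
      rw [Finset.mul_sum]
      have e1 : ∑ i ∈ Finset.Icc 2 k,
            iteratedDeriv i f 1 / (Nat.factorial i) * ((q x - p x) ^ i / p x ^ (i - 1))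
          = ∑ i ∈ Finset.Icc 2 k,
            p x * (iteratedDeriv i f 1 / (Nat.factorial i) * (u - 1) ^ i) := by
        refine Finset.sum_congr rfl fun i hi => ?_
        rw [hterm i (Finset.mem_Icc.mp hi).1]
        ring
      rw [e1]
      apply Finset.sum_subset
      · intro i hi
        simp only [Finset.mem_Icc, Finset.mem_range] at *
        omega
      · intro i hi hni
        simp only [Finset.mem_Icc, Finset.mem_range] at hi hni
        have : i = 0 ∨ i = 1 := by omega
        rcases this with h | h <;> subst h
        · simp [hf1]
        · simp [iteratedDeriv_one, hf'1]
    have humem : u ∈ Set.Icc m M := ⟨hx.1, hx.2⟩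
    rw [hsum2, ← mul_sub, Real.norm_eq_abs, abs_mul, abs_of_pos hp, mul_comm C (p x)]
    exact mul_le_mul_of_nonneg_left
      (taylor_pointwise f k L m M hm hm1 hM1 hf hL humem) hp.le
  calc |∫ x, (p x * f (q x / p x) - ∑ i ∈ Finset.Icc 2 k,
        iteratedDeriv i f 1 / (Nat.factorial i) * ((q x - p x) ^ i / p x ^ (i - 1))) ∂μ|
      = ‖∫ x, (p x * f (q x / p x) - ∑ i ∈ Finset.Icc 2 k,
        iteratedDeriv i f 1 / (Nat.factorial i) * ((q x - p x) ^ i / p x ^ (i - 1))) ∂μ‖ :=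
        (Real.norm_eq_abs _).symm
    _ ≤ ∫ x, C * p x ∂μ := norm_integral_le_of_norm_le (hPint.const_mul C) hbound
    _ = C * ∫ x, p x ∂μ := integral_const_mul _ _
    _ = C := by rw [hp1, mul_one]
end

section
/- Let p(x;θ₁) and p(x;θ₂) be Poisson probability mass functions with rates λ₁ = e^{θ₁} and λ₂ = e^{θ₂}. For integers 0 ≤ j, Σ_{x=0}^{∞} p(x;θ₁)^{1-j} p(x;θ₂)^j = exp(λ₁(λ₂/λ₁)^j + (j-1)λ₁ - jλ₂). Consequently χ_k^±(λ₁:λ₂) = Σ_{j=0}^{k} (-1)^{k-j} C(k,j) exp(λ₁(λ₂/λ₁)^j + (j-1)λ₁ - jλ₂). -/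
lemma pois_pointwise (l₁ l₂ : ℝ) (hl₁ : 0 < l₁)
    (p₁ p₂ : ℕ → ℝ)
    (hp₁ : ∀ x, p₁ x = l₁ ^ x * Real.exp (-l₁) / (Nat.factorial x))
    (hp₂ : ∀ x, p₂ x = l₂ ^ x * Real.exp (-l₂) / (Nat.factorial x))
    (j x : ℕ) :
    p₁ x ^ ((1 : ℤ) - (j : ℤ)) * p₂ x ^ (j : ℤ)
      = (l₁ * (l₂ / l₁) ^ j) ^ x / (Nat.factorial x)
        * Real.exp (((j : ℝ) - 1) * l₁ - (j : ℝ) * l₂) := by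
  have hf : (0:ℝ) < (Nat.factorial x : ℝ) := by exact_mod_cast x.factorial_pos
  have hp1 : (0:ℝ) < p₁ x := by
    rw [hp₁]; positivity
  rw [sub_eq_add_neg, zpow_add₀ hp1.ne', zpow_one, zpow_neg, zpow_natCast, zpow_natCast,
    hp₁, hp₂]
  rw [Real.exp_sub, Real.exp_neg, Real.exp_neg] at *
  field_simp
  have hj2 : Real.exp ((j:ℝ) * l₂) = Real.exp l₂ ^ j := Real.exp_nat_mul l₂ j
  have e1 : Real.exp (((j:ℝ)-1) * l₁) = Real.exp l₁ ^ j / Real.exp l₁ := by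
    rw [eq_div_iff (Real.exp_ne_zero _), ← Real.exp_nat_mul, ← Real.exp_add]; ring_nf
  rw [mul_comm l₂ (j:ℝ), mul_comm l₁ ((j:ℝ) - 1), hj2, e1]
  have c := hl₁.ne'
  field_simp
  ring_nf
  simp only [inv_pow]
  field_simp

/-- For Poisson pmfs with rates `λ₁ = e^θ₁` and `λ₂ = e^θ₂`: for every integer `j ≥ 0`,
`Σ_x p(x;θ₁)^(1-j) p(x;θ₂)^j = exp(λ₁(λ₂/λ₁)^j + (j-1)λ₁ - jλ₂)`, and consequently
`χ_k^±(λ₁:λ₂) = Σ_{j=0}^k (-1)^(k-j) C(k,j) exp(λ₁(λ₂/λ₁)^j + (j-1)λ₁ - jλ₂)`. -/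
theorem poisson_chi_closed_form (l₁ l₂ : ℝ) (hl₁ : 0 < l₁) (hl₂ : 0 < l₂)
    (p₁ p₂ : ℕ → ℝ)
    (hp₁ : ∀ x, p₁ x = l₁ ^ x * Real.exp (-l₁) / (Nat.factorial x))
    (hp₂ : ∀ x, p₂ x = l₂ ^ x * Real.exp (-l₂) / (Nat.factorial x))
    (k : ℕ) (hk : 2 ≤ k) :
    (∀ j : ℕ,
      ∑' x : ℕ, p₁ x ^ ((1 : ℤ) - (j : ℤ)) * p₂ x ^ (j : ℤ)
        = Real.exp (l₁ * (l₂ / l₁) ^ j + ((j : ℝ) - 1) * l₁ - (j : ℝ) * l₂))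
    ∧ ∑' x : ℕ, (p₂ x - p₁ x) ^ k / p₁ x ^ (k - 1)
        = ∑ j ∈ Finset.range (k + 1),
            (-1 : ℝ) ^ (k - j) * (Nat.choose k j : ℝ)
              * Real.exp (l₁ * (l₂ / l₁) ^ j + ((j : ℝ) - 1) * l₁ - (j : ℝ) * l₂) := by
  have hexp : ∀ μ : ℝ, ∑' n : ℕ, μ ^ n / (Nat.factorial n) = Real.exp μ := by
    intro μ
    rw [Real.exp_eq_exp_ℝ, NormedSpace.exp_eq_tsum_div]
  have hpt := pois_pointwise l₁ l₂ hl₁ p₁ p₂ hp₁ hp₂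
  have hsum : ∀ j : ℕ,
      Summable (fun x : ℕ => p₁ x ^ ((1 : ℤ) - (j : ℤ)) * p₂ x ^ (j : ℤ)) := by
    intro j
    have := (Real.summable_pow_div_factorial (l₁ * (l₂ / l₁) ^ j)).mul_right
      (Real.exp (((j : ℝ) - 1) * l₁ - (j : ℝ) * l₂))
    exact this.congr fun x => (hpt j x).symm
  have h1 : ∀ j : ℕ,
      ∑' x : ℕ, p₁ x ^ ((1 : ℤ) - (j : ℤ)) * p₂ x ^ (j : ℤ)
        = Real.exp (l₁ * (l₂ / l₁) ^ j + ((j : ℝ) - 1) * l₁ - (j : ℝ) * l₂) := by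
    intro j
    calc ∑' x : ℕ, p₁ x ^ ((1 : ℤ) - (j : ℤ)) * p₂ x ^ (j : ℤ)
        = ∑' x : ℕ, (l₁ * (l₂ / l₁) ^ j) ^ x / (Nat.factorial x)
            * Real.exp (((j : ℝ) - 1) * l₁ - (j : ℝ) * l₂) := by
          exact tsum_congr fun x => hpt j x
      _ = (∑' x : ℕ, (l₁ * (l₂ / l₁) ^ j) ^ x / (Nat.factorial x))
            * Real.exp (((j : ℝ) - 1) * l₁ - (j : ℝ) * l₂) := tsum_mul_right
      _ = Real.exp (l₁ * (l₂ / l₁) ^ j) * Real.exp (((j : ℝ) - 1) * l₁ - (j : ℝ) * l₂) := by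
          rw [hexp]
      _ = Real.exp (l₁ * (l₂ / l₁) ^ j + ((j : ℝ) - 1) * l₁ - (j : ℝ) * l₂) := by
          rw [← Real.exp_add]; ring_nf
  refine ⟨h1, ?_⟩
  have hdiv : ∀ x : ℕ, (p₂ x - p₁ x) ^ k / p₁ x ^ (k - 1)
      = ∑ j ∈ Finset.range (k + 1),
          (-1 : ℝ) ^ (k - j) * (Nat.choose k j : ℝ)
            * (p₁ x ^ ((1 : ℤ) - (j : ℤ)) * p₂ x ^ (j : ℤ)) := by
    intro x
    have hp1 : (0:ℝ) < p₁ x := by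
      have hf : (0:ℝ) < (Nat.factorial x : ℝ) := by exact_mod_cast x.factorial_pos
      rw [hp₁]; positivity
    rw [sub_pow, Finset.sum_div]
    refine Finset.sum_congr rfl fun j hj => ?_
    have hjk : j ≤ k := by
      have := Finset.mem_range.mp hj; omega
    have sign : (-1:ℝ) ^ (j + k) = (-1:ℝ) ^ (k - j) := by
      rw [show j + k = (k - j) + 2 * j by omega, pow_add, pow_mul]
      simp
    rw [sub_eq_add_neg (1 : ℤ), zpow_add₀ hp1.ne', zpow_one, zpow_neg, zpow_natCast,
      zpow_natCast, pow_sub₀ _ hp1.ne' hjk, pow_sub₀ _ hp1.ne' (show 1 ≤ k by omega),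
      sign]
    field_simp
  calc ∑' x : ℕ, (p₂ x - p₁ x) ^ k / p₁ x ^ (k - 1)
      = ∑' x : ℕ, ∑ j ∈ Finset.range (k + 1),
          (-1 : ℝ) ^ (k - j) * (Nat.choose k j : ℝ)
            * (p₁ x ^ ((1 : ℤ) - (j : ℤ)) * p₂ x ^ (j : ℤ)) := tsum_congr hdiv
    _ = ∑ j ∈ Finset.range (k + 1), ∑' x : ℕ,
          (-1 : ℝ) ^ (k - j) * (Nat.choose k j : ℝ)
            * (p₁ x ^ ((1 : ℤ) - (j : ℤ)) * p₂ x ^ (j : ℤ)) := by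
        exact Summable.tsum_finsetSum fun j _ => (hsum j).mul_left _
    _ = ∑ j ∈ Finset.range (k + 1),
          (-1 : ℝ) ^ (k - j) * (Nat.choose k j : ℝ)
            * Real.exp (l₁ * (l₂ / l₁) ^ j + ((j : ℝ) - 1) * l₁ - (j : ℝ) * l₂) := by
        refine Finset.sum_congr rfl fun j _ => ?_
        rw [tsum_mul_left, h1 j]
end
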